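/- Let Re > 0 and let φ : [0,1] → ℝ be continuous with φ(x) > 0 for all x ∈ [0,1]. Let a_0 = ∫_0^1 φ(x) dx and a_n = 2 ∫_0^1 φ(x) cos(nπx) dx for n ≥ 1, and define θ(x,t) = a_0 + ∑_{n=1}^∞ a_n exp(-n²π²t/Re) cos(nπx). Then θ(x,t) > 0 for every x ∈ [0,1] and every t > 0. -/

import Mathlib

open Real

lemma aux_gauss_summable {k : ℝ} (hk : 0 < k) (v : ℝ) :
    Summable (fun n : ℤ => Real.exp (-(k * ((n : ℝ) - v)^2))) := by
  have h := summable_pow_mul_jacobiTheta₂_term_bound (k * |v| / π) (div_pos hk pi_pos) 0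
  refine h.of_nonneg_of_le (fun n => (Real.exp_pos _).le) (fun n => ?_)
  rw [pow_zero, one_mul]
  apply Real.exp_le_exp.mpr
  have h1 : (n:ℝ) * v ≤ |(n:ℝ)| * |v| := by
    calc (n:ℝ) * v ≤ |(n:ℝ) * v| := le_abs_self _
    _ = |(n:ℝ)| * |v| := abs_mul _ _
  have hπ : (0:ℝ) < π := pi_pos
  have h2 : -π * (k / π * (n:ℝ) ^ 2 - 2 * (k * |v| / π) * |(n:ℤ)|) =
      -(k * (n:ℝ)^2) + 2 * k * (|(n:ℝ)| * |v|) := by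
    push_cast
    field_simp
    ring
  rw [h2]
  nlinarith [sq_nonneg v, abs_nonneg v, abs_nonneg ((n:ℝ))]

lemma aux_int_summable {c : ℝ} (hc : 0 < c) :
    Summable (fun n : ℤ => Real.exp (-(c * (n:ℝ)^2))) := by
  simpa using aux_gauss_summable hc 0

set_option maxHeartbeats 1000000 in
open Complex in
lemma theta_kernel_pos {c : ℝ} (hc : 0 < c) (u : ℝ) :
    0 < ∑' n : ℤ, Real.exp (-(c * (n:ℝ)^2)) * Real.cos ((n:ℝ) * π * u) := by
  have hπ : (0:ℝ) < π := pi_pos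
  set a : ℂ := ((c / π : ℝ) : ℂ) with ha_def
  have ha : 0 < a.re := by simpa [ha_def] using div_pos hc hπ
  have key := Complex.tsum_exp_neg_quadratic ha (I * u / 2)
  have hπ' : (π:ℂ) ≠ 0 := Complex.ofReal_ne_zero.mpr hπ.ne'
  have hc' : (c:ℂ) ≠ 0 := Complex.ofReal_ne_zero.mpr hc.ne'
  have hca : a = (c:ℂ) / (π:ℂ) := by rw [ha_def]; push_cast; rfl
  have hterm : ∀ n : ℤ, Complex.exp (-↑π * a * (n:ℂ) ^ 2 + 2 * ↑π * (I * ↑u / 2) * (n:ℂ))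
      = Complex.exp (↑(-(c * (n:ℝ)^2)) + ↑((n:ℝ) * π * u) * I) := by
    intro n
    have h1 : -(π:ℂ) * a = -(c:ℂ) := by rw [hca]; field_simp
    congr 1
    rw [h1]
    push_cast
    ring
  have hsummC : Summable (fun n : ℤ =>
      Complex.exp (↑(-(c * (n:ℝ)^2)) + ↑((n:ℝ) * π * u) * I)) := by
    apply Summable.of_norm
    have h2 : ∀ n : ℤ, ‖Complex.exp (↑(-(c * (n:ℝ)^2)) + ↑((n:ℝ) * π * u) * I)‖
        = Real.exp (-(c * (n:ℝ)^2)) := by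
      intro n
      rw [Complex.norm_exp]
      norm_num [pow_two, Complex.add_re, Complex.ofReal_re, Complex.mul_re, Complex.I_re,
        Complex.I_im, Complex.ofReal_im, Complex.intCast_re, Complex.intCast_im]
    rw [funext h2]
    exact aux_int_summable hc
  have hterm2 : ∀ n : ℤ, Complex.exp (-↑π / a * ((n:ℂ) + I * (I * ↑u / 2)) ^ 2)
      = ((Real.exp (-(π^2/c * ((n:ℝ) - u/2)^2)) : ℝ) : ℂ) := by
    intro n
    have hI : (I:ℂ) * (I * ↑u / 2) = -(↑u/2) := by
      rw [show (I:ℂ) * (I * ↑u / 2) = (I*I) * ↑u/2 by ring, Complex.I_mul_I]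
      ring
    have h2 : -(π:ℂ) / a = -((π:ℂ)^2/(c:ℂ)) := by rw [hca, div_div_eq_mul_div]; ring
    rw [Complex.ofReal_exp]
    congr 1
    rw [hI, h2]
    push_cast
    ring
  set T : ℝ := ∑' n : ℤ, Real.exp (-(π^2/c * ((n:ℝ) - u/2)^2)) with hT_def
  have hTpos : 0 < T :=
    Summable.tsum_pos (aux_gauss_summable (div_pos (pow_pos hπ 2) hc) (u/2))
      (fun n => (Real.exp_pos _).le) 0 (Real.exp_pos _)
  have hcpow : (1:ℂ) / a ^ (1/2 : ℂ) = ((1 / (c/π) ^ ((1:ℝ)/2) : ℝ) : ℂ) := by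
    rw [show ((1 / (c/π) ^ ((1:ℝ)/2) : ℝ) : ℂ)
        = 1 / (((c/π : ℝ)):ℂ) ^ (((1:ℝ)/2 : ℝ):ℂ) by
      rw [Complex.ofReal_div, Complex.ofReal_one, Complex.ofReal_cpow (div_pos hc hπ).le]]
    rw [ha_def]
    norm_num
  have hkey2 : (∑' n : ℤ, Complex.exp (↑(-(c * (n:ℝ)^2)) + ↑((n:ℝ) * π * u) * I))
      = (((1 / (c/π) ^ ((1:ℝ)/2)) * T : ℝ) : ℂ) := by
    rw [tsum_congr hterm, hcpow, tsum_congr hterm2] at key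
    rw [← Complex.ofReal_tsum, ← hT_def, ← Complex.ofReal_mul] at key
    exact key
  have hre : (∑' n : ℤ, Real.exp (-(c * (n:ℝ)^2)) * Real.cos ((n:ℝ) * π * u))
      = (∑' n : ℤ, Complex.exp (↑(-(c * (n:ℝ)^2)) + ↑((n:ℝ) * π * u) * I)).re := by
    rw [Complex.re_tsum hsummC]
    refine tsum_congr fun n => ?_
    rw [Complex.exp_re]
    norm_num [pow_two, Complex.add_re, Complex.ofReal_re, Complex.mul_re, Complex.I_re,
      Complex.I_im, Complex.ofReal_im, Complex.add_im, Complex.mul_im,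
      Complex.intCast_re, Complex.intCast_im]
  rw [hre, hkey2, Complex.ofReal_re]
  exact mul_pos (div_pos one_pos (Real.rpow_pos_of_pos (div_pos hc hπ) _)) hTpos

lemma aux_nat_summable {c : ℝ} (hc : 0 < c) :
    Summable (fun n : ℕ => Real.exp (-(c * ((n:ℝ)+1)^2))) := by
  refine Summable.of_nonneg_of_le (fun n => (Real.exp_pos _).le) (fun n => ?_)
    (summable_geometric_of_lt_one (Real.exp_pos (-c)).le
      (Real.exp_lt_one_iff.mpr (neg_neg_iff_pos.mpr hc)) )
  have : Real.exp (-c) ^ n = Real.exp (-(c * n)) := by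
    rw [← Real.exp_nat_mul]; ring_nf
  rw [this]
  apply Real.exp_le_exp.mpr
  nlinarith [sq_nonneg ((n:ℝ)), Nat.cast_nonneg (α := ℝ) n]

lemma aux_nat_summable' {c : ℝ} (hc : 0 < c) :
    Summable (fun n : ℕ => Real.exp (-(c * (n:ℝ)^2))) := by
  refine Summable.of_nonneg_of_le (fun n => (Real.exp_pos _).le) (fun n => ?_)
    (summable_geometric_of_lt_one (Real.exp_pos (-c)).le
      (Real.exp_lt_one_iff.mpr (neg_neg_iff_pos.mpr hc)) )
  have h : Real.exp (-c) ^ n = Real.exp (-(c * n)) := by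
    rw [← Real.exp_nat_mul]; ring_nf
  rw [h]
  apply Real.exp_le_exp.mpr
  have h2 : (n:ℝ) = 0 ∨ 1 ≤ (n:ℝ) := by exact_mod_cast Nat.eq_zero_or_pos n
  rcases h2 with h2 | h2
  · simp [h2]
  · nlinarith [mul_nonneg hc.le (mul_nonneg (sub_nonneg.mpr h2) (Nat.cast_nonneg (α := ℝ) n))]

lemma kernel_nat_pos {c : ℝ} (hc : 0 < c) (x y : ℝ) :
    0 < 1 + ∑' n : ℕ, 2 * Real.exp (-(c * ((n:ℝ)+1)^2))
      * Real.cos (((n:ℝ)+1) * π * x) * Real.cos (((n:ℝ)+1) * π * y) := by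
  -- the ℤ-indexed kernel
  have hsummZ : ∀ u : ℝ, Summable (fun n : ℤ =>
      Real.exp (-(c * (n:ℝ)^2)) * Real.cos ((n:ℝ) * π * u)) := by
    intro u
    refine Summable.of_norm_bounded (aux_int_summable hc) (fun n => ?_)
    rw [Real.norm_eq_abs, abs_mul, Real.abs_exp]
    nlinarith [Real.abs_cos_le_one ((n:ℝ) * π * u), Real.exp_pos (-(c * (n:ℝ)^2)),
      abs_nonneg (Real.cos ((n:ℝ) * π * u))]
  have hsummD : ∀ u : ℝ, Summable (fun n : ℕ =>
      Real.exp (-(c * ((n:ℝ)+1)^2)) * Real.cos (((n:ℝ)+1) * π * u)) := by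
    intro u
    refine Summable.of_norm_bounded (aux_nat_summable hc) (fun n => ?_)
    rw [Real.norm_eq_abs, abs_mul, Real.abs_exp]
    nlinarith [Real.abs_cos_le_one (((n:ℝ)+1) * π * u), Real.exp_pos (-(c * ((n:ℝ)+1)^2)),
      abs_nonneg (Real.cos (((n:ℝ)+1) * π * u))]
  have hG : ∀ u : ℝ, (∑' n : ℤ, Real.exp (-(c * (n:ℝ)^2)) * Real.cos ((n:ℝ) * π * u))
      = 1 + 2 * ∑' n : ℕ, Real.exp (-(c * ((n:ℝ)+1)^2)) * Real.cos (((n:ℝ)+1) * π * u) := by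
    intro u
    have hn1 : Summable (fun n : ℕ =>
        Real.exp (-(c * ((n:ℤ):ℝ)^2)) * Real.cos (((n:ℤ):ℝ) * π * u)) := by
      refine Summable.of_norm_bounded (aux_nat_summable' hc) (fun n => ?_)
      rw [Real.norm_eq_abs, abs_mul, Real.abs_exp]
      push_cast
      nlinarith [Real.abs_cos_le_one ((n:ℝ) * π * u), Real.exp_pos (-(c * (n:ℝ)^2)),
        abs_nonneg (Real.cos ((n:ℝ) * π * u))]
    have hn2 : Summable (fun n : ℕ =>
        Real.exp (-(c * ((-((n:ℤ)+1) : ℤ) : ℝ)^2)) * Real.cos (((-((n:ℤ)+1) : ℤ) : ℝ) * π * u)) := by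
      refine Summable.of_norm_bounded (aux_nat_summable hc) (fun n => ?_)
      rw [Real.norm_eq_abs, abs_mul, Real.abs_exp]
      push_cast
      rw [show (-((n:ℝ)+1))^2 = ((n:ℝ)+1)^2 by ring]
      nlinarith [Real.abs_cos_le_one ((-((n:ℝ)+1)) * π * u), Real.exp_pos (-(c * ((n:ℝ)+1)^2)),
        abs_nonneg (Real.cos ((-((n:ℝ)+1)) * π * u))]
    rw [tsum_of_nat_of_neg_add_one
      (f := fun n : ℤ => Real.exp (-(c * (n:ℝ)^2)) * Real.cos ((n:ℝ) * π * u)) hn1 hn2]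
    have e1 : ∀ n : ℕ, Real.exp (-(c * ((-((n:ℤ)+1) : ℤ) : ℝ)^2)) * Real.cos (((-((n:ℤ)+1) : ℤ) : ℝ) * π * u)
        = Real.exp (-(c * ((n:ℝ)+1)^2)) * Real.cos (((n:ℝ)+1) * π * u) := by
      intro n
      push_cast
      rw [show (-((n:ℝ)+1)) * π * u = -(((n:ℝ)+1) * π * u) by ring, Real.cos_neg, neg_sq]
    have e2 : (∑' n : ℕ, Real.exp (-(c * ((n:ℤ):ℝ)^2)) * Real.cos (((n:ℤ):ℝ) * π * u))
        = 1 + ∑' n : ℕ, Real.exp (-(c * ((n:ℝ)+1)^2)) * Real.cos (((n:ℝ)+1) * π * u) := by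
      rw [hn1.tsum_eq_zero_add]
      congr 1
      · norm_num
      · refine tsum_congr fun n => ?_
        push_cast
        ring_nf
    rw [e2, tsum_congr e1]
    ring
  have h1 := theta_kernel_pos hc (x - y)
  have h2 := theta_kernel_pos hc (x + y)
  rw [hG] at h1 h2
  have hsum_eq : (∑' n : ℕ, Real.exp (-(c * ((n:ℝ)+1)^2)) * Real.cos (((n:ℝ)+1) * π * (x-y)))
      + (∑' n : ℕ, Real.exp (-(c * ((n:ℝ)+1)^2)) * Real.cos (((n:ℝ)+1) * π * (x+y)))
      = ∑' n : ℕ, 2 * Real.exp (-(c * ((n:ℝ)+1)^2))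
          * Real.cos (((n:ℝ)+1) * π * x) * Real.cos (((n:ℝ)+1) * π * y) := by
    rw [← (hsummD (x-y)).tsum_add (hsummD (x+y))]
    refine tsum_congr fun n => ?_
    rw [show ((n:ℝ)+1) * π * (x-y) = ((n:ℝ)+1) * π * x - ((n:ℝ)+1) * π * y by ring,
      show ((n:ℝ)+1) * π * (x+y) = ((n:ℝ)+1) * π * x + ((n:ℝ)+1) * π * y by ring,
      Real.cos_sub, Real.cos_add]
    ring
  nlinarith [h1, h2, hsum_eq]


/-- If `φ` is continuous and strictly positive on `[0,1]`, then the cosine heat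
series built from its Fourier cosine coefficients is strictly positive for all
`x ∈ [0,1]` and `t > 0`. -/
theorem cosine_heat_series_positive (Re : ℝ) (hRe : 0 < Re)
    (φ : ℝ → ℝ) (hcont : ContinuousOn φ (Set.Icc 0 1))
    (hpos : ∀ x ∈ Set.Icc (0:ℝ) 1, 0 < φ x)
    (a : ℕ → ℝ) (ha0 : a 0 = ∫ x in (0:ℝ)..1, φ x)
    (han : ∀ n : ℕ, 1 ≤ n → a n = 2 * ∫ x in (0:ℝ)..1, φ x * cos ((n : ℝ) * π * x))
    (θ : ℝ → ℝ → ℝ)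
    (hθ : ∀ x t, θ x t
      = a 0 + ∑' n : ℕ,
          a (n + 1) * exp (-((n + 1 : ℝ) ^ 2 * π ^ 2 * t) / Re)
            * cos ((n + 1 : ℝ) * π * x)) :
    ∀ x ∈ Set.Icc (0:ℝ) 1, ∀ t > (0:ℝ), 0 < θ x t := by
  intro x hx t ht
  have hc : 0 < π^2 * t / Re := by positivity
  set c : ℝ := π^2 * t / Re with hc_def
  -- the exponential factor
  have hE : ∀ n : ℕ, Real.exp (-(((n:ℝ) + 1) ^ 2 * π ^ 2 * t) / Re)
      = Real.exp (-(c * ((n:ℝ)+1)^2)) := by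
    intro n
    rw [hc_def]
    congr 1
    ring
  have han' : ∀ n : ℕ, a (n+1)
      = 2 * ∫ y in (0:ℝ)..1, φ y * Real.cos (((n:ℝ)+1) * π * y) := by
    intro n
    rw [han (n+1) (by omega)]
    push_cast
    rfl
  -- kernel series
  set S : ℝ → ℝ := fun y => ∑' n : ℕ, 2 * Real.exp (-(c * ((n:ℝ)+1)^2))
      * Real.cos (((n:ℝ)+1) * π * x) * Real.cos (((n:ℝ)+1) * π * y) with hS_def
  set g : ℕ → ℝ → ℝ := fun n y => φ y * (2 * Real.exp (-(c * ((n:ℝ)+1)^2))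
      * Real.cos (((n:ℝ)+1) * π * x) * Real.cos (((n:ℝ)+1) * π * y)) with hg_def
  obtain ⟨M, hM⟩ := isCompact_Icc.exists_bound_of_continuousOn hcont
  have hM0 : 0 ≤ M := le_trans (norm_nonneg _) (hM 0 (by norm_num))
  have hgcont : ∀ n, ContinuousOn (g n) (Set.Icc 0 1) := by
    intro n
    rw [hg_def]
    exact hcont.mul (Continuous.continuousOn (by fun_prop))
  have hgint : ∀ n, MeasureTheory.IntegrableOn (g n) (Set.Ioc (0:ℝ) 1) := fun n =>
    ((hgcont n).integrableOn_Icc).mono_set Set.Ioc_subset_Icc_self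
  have hgbound : ∀ n, ∀ y ∈ Set.Icc (0:ℝ) 1,
      ‖g n y‖ ≤ M * 2 * Real.exp (-(c * ((n:ℝ)+1)^2)) := by
    intro n y hy
    have h1 : ‖φ y‖ ≤ M := hM y hy
    rw [hg_def]
    simp only
    rw [Real.norm_eq_abs, abs_mul]
    have h2 : |2 * Real.exp (-(c * ((n:ℝ)+1)^2)) * Real.cos (((n:ℝ)+1) * π * x)
        * Real.cos (((n:ℝ)+1) * π * y)| ≤ 2 * Real.exp (-(c * ((n:ℝ)+1)^2)) := by
      rw [abs_mul, abs_mul, abs_mul, Real.abs_exp, abs_of_nonneg (by norm_num : (0:ℝ) ≤ 2)]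
      have c1 := Real.abs_cos_le_one (((n:ℝ)+1) * π * x)
      have c2 := Real.abs_cos_le_one (((n:ℝ)+1) * π * y)
      have e1 := (Real.exp_pos (-(c * ((n:ℝ)+1)^2))).le
      have h3 : |Real.cos (((n:ℝ)+1) * π * x)| * |Real.cos (((n:ℝ)+1) * π * y)| ≤ 1 :=
        mul_le_one₀ c1 (abs_nonneg _) c2
      nlinarith [mul_nonneg (abs_nonneg (Real.cos (((n:ℝ)+1) * π * x)))
        (abs_nonneg (Real.cos (((n:ℝ)+1) * π * y)))]
    calc |φ y| * |2 * Real.exp (-(c * ((n:ℝ)+1)^2)) * Real.cos (((n:ℝ)+1) * π * x)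
        * Real.cos (((n:ℝ)+1) * π * y)|
        ≤ M * (2 * Real.exp (-(c * ((n:ℝ)+1)^2))) := by
          apply mul_le_mul (by rwa [Real.norm_eq_abs] at h1) h2 (abs_nonneg _) hM0
      _ = M * 2 * Real.exp (-(c * ((n:ℝ)+1)^2)) := by ring
  have hterm : ∀ n : ℕ, a (n+1) * Real.exp (-(((n:ℝ) + 1) ^ 2 * π ^ 2 * t) / Re)
      * Real.cos (((n:ℝ) + 1) * π * x) = ∫ y in Set.Ioc (0:ℝ) 1, g n y := by
    intro n
    rw [hE n, han' n, ← intervalIntegral.integral_of_le zero_le_one]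
    rw [show (∫ y in (0:ℝ)..1, g n y)
        = ∫ y in (0:ℝ)..1, (2 * Real.exp (-(c * ((n:ℝ)+1)^2)) * Real.cos (((n:ℝ)+1) * π * x))
          * (φ y * Real.cos (((n:ℝ)+1) * π * y)) from
      intervalIntegral.integral_congr (fun y _ => by rw [hg_def]; ring)]
    rw [intervalIntegral.integral_const_mul]
    ring
  have hnorm_int : Summable (fun n => ∫ y in Set.Ioc (0:ℝ) 1, ‖g n y‖) := by
    refine Summable.of_nonneg_of_le
      (fun n => MeasureTheory.integral_nonneg (fun y => norm_nonneg _)) (fun n => ?_)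
      ((aux_nat_summable hc).mul_left (M * 2))
    calc (∫ y in Set.Ioc (0:ℝ) 1, ‖g n y‖)
        ≤ ∫ _ in Set.Ioc (0:ℝ) 1, M * 2 * Real.exp (-(c * ((n:ℝ)+1)^2)) := by
          refine MeasureTheory.setIntegral_mono_on ((hgint n).norm) ?_ measurableSet_Ioc
            (fun y hy => hgbound n y (Set.Ioc_subset_Icc_self hy))
          exact MeasureTheory.integrableOn_const (by simp [Real.volume_Ioc])
      _ = M * 2 * Real.exp (-(c * ((n:ℝ)+1)^2)) := by
          rw [MeasureTheory.setIntegral_const]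
          simp [Real.volume_Ioc]
      _ ≤ M * 2 * Real.exp (-(c * ((n:ℝ)+1)^2)) := le_of_eq (by ring)
  have hswap := MeasureTheory.integral_tsum_of_summable_integral_norm
      (μ := MeasureTheory.volume.restrict (Set.Ioc (0:ℝ) 1)) (F := g) hgint hnorm_int
  have hgy : (fun y => ∑' n : ℕ, g n y) = fun y => φ y * S y := by
    funext y
    rw [hS_def, hg_def]
    exact tsum_mul_left
  have hScont : Continuous S := by
    rw [hS_def]
    refine continuous_tsum
      (f := fun (n : ℕ) (y : ℝ) => 2 * Real.exp (-(c * ((n:ℝ)+1)^2))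
        * Real.cos (((n:ℝ)+1) * π * x) * Real.cos (((n:ℝ)+1) * π * y))
      (u := fun n : ℕ => 2 * Real.exp (-(c * ((n:ℝ)+1)^2)))
      (fun n => by fun_prop) ((aux_nat_summable hc).mul_left 2) (fun n y => ?_)
    rw [Real.norm_eq_abs, abs_mul, abs_mul, abs_mul, Real.abs_exp,
      abs_of_nonneg (by norm_num : (0:ℝ) ≤ 2)]
    have c1 := Real.abs_cos_le_one (((n:ℝ)+1) * π * x)
    have c2 := Real.abs_cos_le_one (((n:ℝ)+1) * π * y)
    have e1 := (Real.exp_pos (-(c * ((n:ℝ)+1)^2))).le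
    have h3 : |Real.cos (((n:ℝ)+1) * π * x)| * |Real.cos (((n:ℝ)+1) * π * y)| ≤ 1 :=
      mul_le_one₀ c1 (abs_nonneg _) c2
    show 2 * Real.exp (-(c * ((n:ℝ)+1)^2)) * |Real.cos (((n:ℝ)+1) * π * x)|
        * |Real.cos (((n:ℝ)+1) * π * y)| ≤ 2 * Real.exp (-(c * ((n:ℝ)+1)^2))
    nlinarith [mul_nonneg (abs_nonneg (Real.cos (((n:ℝ)+1) * π * x)))
      (abs_nonneg (Real.cos (((n:ℝ)+1) * π * y)))]
  have hφint : MeasureTheory.IntegrableOn φ (Set.Ioc (0:ℝ) 1) :=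
    (hcont.integrableOn_Icc).mono_set Set.Ioc_subset_Icc_self
  have hSint : MeasureTheory.IntegrableOn (fun y => φ y * S y) (Set.Ioc (0:ℝ) 1) :=
    ((hcont.mul hScont.continuousOn).integrableOn_Icc).mono_set Set.Ioc_subset_Icc_self
  have hθ2 : θ x t = ∫ y in Set.Ioc (0:ℝ) 1, (φ y + φ y * S y) := by
    rw [hθ x t, ha0, intervalIntegral.integral_of_le zero_le_one, tsum_congr hterm,
      hswap, hgy, ← MeasureTheory.integral_add hφint hSint]
  rw [hθ2]
  have hpos' : ∀ y ∈ Set.Ioc (0:ℝ) 1, 0 < φ y + φ y * S y := by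
    intro y hy
    have h1 : 0 < φ y := hpos y (Set.Ioc_subset_Icc_self hy)
    have h2 : 0 < 1 + S y := by rw [hS_def]; exact kernel_nat_pos hc x y
    nlinarith
  rw [MeasureTheory.setIntegral_pos_iff_support_of_nonneg_ae
    ((MeasureTheory.ae_restrict_iff' measurableSet_Ioc).mpr
      (MeasureTheory.ae_of_all _ (fun y hy => (hpos' y hy).le)))
    (hφint.add hSint)]
  refine lt_of_lt_of_le ?_ (MeasureTheory.measure_mono
    (fun y hy => ⟨(hpos' y hy).ne', hy⟩ :
      Set.Ioc (0:ℝ) 1 ⊆ Function.support (fun y => φ y + φ y * S y) ∩ Set.Ioc 0 1))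
  simp [Real.volume_Ioc]
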